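/- Let 𝓘 be a finite index set of cardinality n and let (X_i)_{i∈𝓘} be a collection of square-integrable, mean-zero d-dimensional random vectors. For each i ∈ 𝓘, let A_i ⊆ 𝓘 be a set containing i such that X_i is independent of the collection (X_j)_{j ∈ A_i^c}. Let I be uniformly distributed on 𝓘 and independent of (X_i)_{i∈𝓘}. Then (W, W', G) = ( Σ_{i∈𝓘} X_i , Σ_{i ∈ 𝓘 \ A_I} X_i , −n X_I ) is a d-dimensional Stein coupling. -/

import Mathlib

open MeasureTheory ProbabilityTheory

noncomputable section

/-- `(W, W', G)` is a `d`-dimensional Stein coupling. -/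
def IsSteinCoupling {Ω : Type*} [MeasurableSpace Ω] (μ : Measure Ω) {d : ℕ}
    (W W' G : Ω → Fin d → ℝ) : Prop :=
  Measurable W ∧ Measurable W' ∧ Measurable G ∧
    MemLp W 2 μ ∧ MemLp W' 2 μ ∧ MemLp G 2 μ ∧
    ∀ F : (Fin d → ℝ) → (Fin d → ℝ), Measurable F →
      Integrable (fun ω => ∑ i, G ω i * F (W' ω) i) μ →
      Integrable (fun ω => ∑ i, G ω i * F (W ω) i) μ →
      Integrable (fun ω => ∑ i, W ω i * F (W ω) i) μ →
      (∫ ω, ∑ i, G ω i * F (W' ω) i ∂μ) - (∫ ω, ∑ i, G ω i * F (W ω) i ∂μ)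
        = ∫ ω, ∑ i, W ω i * F (W ω) i ∂μ

private lemma helper_decomp {Ω : Type*} [MeasurableSpace Ω] (μ : Measure Ω)
    [IsProbabilityMeasure μ] {ι : Type*} [Fintype ι] [MeasurableSpace ι]
    [MeasurableSingletonClass ι] {E : Type*} [MeasurableSpace E]
    (I : Ω → ι) (Y : Ω → E) (hI : Measurable I) (hY : Measurable Y)
    (hmap : μ.map (fun ω => (I ω, Y ω)) = (μ.map I).prod (μ.map Y))
    (hpos : ∀ k : ι, μ.map I {k} ≠ 0)
    (H : ι × E → ℝ) (hH : Measurable H)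
    (hint : Integrable (fun ω => H (I ω, Y ω)) μ) :
    (∀ k, Integrable (fun ω => H (k, Y ω)) μ) ∧
    ∫ ω, H (I ω, Y ω) ∂μ = ∑ k, (μ.map I {k}).toReal * ∫ ω, H (k, Y ω) ∂μ := by
  have hpair : Measurable fun ω => (I ω, Y ω) := hI.prodMk hY
  have hintp : Integrable H ((μ.map I).prod (μ.map Y)) := by
    rw [← hmap]
    exact (integrable_map_measure (by rw [hmap]; exact hH.aestronglyMeasurable)
      hpair.aemeasurable).2 hint
  have hae : ∀ᵐ k ∂(μ.map I), Integrable (fun e => H (k, e)) (μ.map Y) :=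
    hintp.prod_right_ae
  have hall : ∀ k, Integrable (fun e => H (k, e)) (μ.map Y) := by
    intro k
    by_contra hk
    have h0 : μ.map I {k' | ¬ Integrable (fun e => H (k', e)) (μ.map Y)} = 0 := by
      rw [← ae_iff] ; exact hae
    have : μ.map I {k} = 0 := by
      refine le_antisymm ?_ zero_le
      rw [← h0]
      exact measure_mono (by intro x hx; simp at hx; subst hx; exact hk)
    exact hpos k this
  have hallμ : ∀ k, Integrable (fun ω => H (k, Y ω)) μ := by
    intro k
    have := hall k
    exact (integrable_map_measure (hH.comp (measurable_prodMk_left)).aestronglyMeasurable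
      hY.aemeasurable).1 this
  refine ⟨hallμ, ?_⟩
  have h1 : ∫ ω, H (I ω, Y ω) ∂μ = ∫ p, H p ∂((μ.map I).prod (μ.map Y)) := by
    rw [← hmap, integral_map hpair.aemeasurable]
    rw [hmap]; exact hH.aestronglyMeasurable
  rw [h1, integral_prod _ hintp]
  rw [integral_fintype ?_]
  · refine Finset.sum_congr rfl fun k _ => ?_
    rw [smul_eq_mul, measureReal_def]
    congr 1
    exact integral_map hY.aemeasurable (hH.comp measurable_prodMk_left).aestronglyMeasurable
  · exact .of_finite

private lemma zero_term {Ω : Type*} [MeasurableSpace Ω] (μ : Measure Ω)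
    [IsProbabilityMeasure μ] {d : ℕ} {β : Type*} [MeasurableSpace β]
    (U : Ω → Fin d → ℝ) (V : Ω → β) (hU : Measurable U) (hV : Measurable V)
    (hUint : Integrable U μ) (hUmean : ∀ j, ∫ ω, U ω j ∂μ = 0)
    (hindep : IndepFun U V μ) (c : β → Fin d → ℝ) (hc : Measurable c) :
    ∫ ω, ∑ j, U ω j * c (V ω) j ∂μ = 0 := by
  have hmap := (indepFun_iff_map_prod_eq_prod_map_map hU.aemeasurable hV.aemeasurable).1 hindep
  set φ : (Fin d → ℝ) × β → ℝ := fun p => ∑ j, p.1 j * c p.2 j with hφ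
  have hφm : Measurable φ := by
    apply Finset.measurable_sum
    intro j _
    exact ((measurable_pi_apply j).comp measurable_fst).mul
      ((measurable_pi_apply j).comp (hc.comp measurable_snd))
  have hUj : ∀ j, Integrable (fun a => a j) (μ.map U) := by
    intro j
    refine (integrable_map_measure (measurable_pi_apply j).aestronglyMeasurable
      hU.aemeasurable).2 ?_
    exact (ContinuousLinearMap.proj (R := ℝ) (φ := fun _ : Fin d => ℝ) j).integrable_comp hUint
  have hUj0 : ∀ j, ∫ a, a j ∂(μ.map U) = 0 := by
    intro j
    rw [integral_map hU.aemeasurable (measurable_pi_apply j).aestronglyMeasurable]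
    exact hUmean j
  have h1 : ∫ ω, ∑ j, U ω j * c (V ω) j ∂μ = ∫ p, φ p ∂((μ.map U).prod (μ.map V)) := by
    rw [← hmap, integral_map (hU.prodMk hV).aemeasurable]
    rw [hmap]; exact hφm.aestronglyMeasurable
  rw [h1]
  by_cases hi : Integrable φ ((μ.map U).prod (μ.map V))
  · rw [integral_prod_symm _ hi]
    have hinner : ∀ b, ∫ a, φ (a, b) ∂(μ.map U) = 0 := by
      intro b
      have : ∫ a, φ (a, b) ∂(μ.map U) = ∑ j, ∫ a, a j * c b j ∂(μ.map U) := by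
        exact integral_finset_sum _ fun j _ => (hUj j).mul_const (c b j)
      rw [this]
      refine Finset.sum_eq_zero fun j _ => ?_
      rw [integral_mul_const, hUj0 j, zero_mul]
    simp [hinner]
  · exact integral_undef hi


set_option maxHeartbeats 2000000 in
/-- **Section 5.3 (local dependence)**: for centered, locally dependent summands
`(X_i)_{i ∈ ι}` with dependency neighbourhoods `A_i ∋ i`, and `I` uniform on `ι`,
independent of the `X_i`, the triple
`(Σ_i X_i, Σ_{i ∉ A_I} X_i, −n X_I)` is a `d`-dimensional Stein coupling. -/
theorem steinCoupling_local_dependence {Ω : Type*} [MeasurableSpace Ω] (μ : Measure Ω)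
    [IsProbabilityMeasure μ] {d n : ℕ}
    {ι : Type*} [Fintype ι] [Nonempty ι] [DecidableEq ι]
    [MeasurableSpace ι] [MeasurableSingletonClass ι]
    (hcard : Fintype.card ι = n)
    (X : ι → Ω → Fin d → ℝ) (A : ι → Finset ι) (I : Ω → ι)
    (hXmeas : ∀ i, Measurable (X i))
    (hX2 : ∀ i, MemLp (X i) 2 μ)
    (hXmean : ∀ i j, ∫ ω, X i ω j ∂μ = 0)
    (hAi : ∀ i, i ∈ A i)
    -- `X i` is independent of the collection `(X j)_{j ∈ A iᶜ}`
    (hlocal : ∀ i, IndepFun (X i) (fun ω => fun j : {j // j ∉ A i} => X (j : ι) ω) μ)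
    (hI : Measurable I)
    -- `I` is uniformly distributed on `ι`
    (hIunif : ∀ i : ι, μ.map I {i} = 1 / Fintype.card ι)
    -- `I` is independent of the whole collection `(X i)_{i ∈ ι}`
    (hIindep : IndepFun I (fun ω => fun i : ι => X i ω) μ) :
    IsSteinCoupling μ (fun ω => ∑ i, X i ω)
      (fun ω => ∑ i ∈ (A (I ω))ᶜ, X i ω)
      (fun ω => -((n : ℝ) • X (I ω) ω)) := by
  have hn : 0 < n := hcard ▸ Fintype.card_pos
  have hnR : (n : ℝ) ≠ 0 := Nat.cast_ne_zero.2 hn.ne'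
  -- the collection as a single random variable
  set Xs : Ω → ι → Fin d → ℝ := fun ω => fun i : ι => X i ω with hXsdef
  have hXs : Measurable Xs := measurable_pi_lambda _ hXmeas
  -- rewriting `W'` and `G` as finite sums of indicators
  have hW'eq : (fun ω => ∑ i ∈ (A (I ω))ᶜ, X i ω)
      = fun ω => ∑ k : ι, ({ω' | I ω' = k}).indicator
        (fun ω' => ∑ i ∈ (A k)ᶜ, X i ω') ω := by
    funext ω
    simp only [Set.indicator_apply, Set.mem_setOf_eq]
    rw [Finset.sum_ite_eq]
    simp
  have hGeq : (fun ω => -((n : ℝ) • X (I ω) ω))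
      = fun ω => ∑ k : ι, ({ω' | I ω' = k}).indicator
        (fun ω' => -((n : ℝ) • X k ω')) ω := by
    funext ω
    simp only [Set.indicator_apply, Set.mem_setOf_eq]
    rw [Finset.sum_ite_eq]
    simp
  have hsets : ∀ k : ι, MeasurableSet {ω' | I ω' = k} :=
    fun k => hI (measurableSet_singleton k)
  refine ⟨?_, ?_, ?_, ?_, ?_, ?_, ?_⟩
  · exact Finset.measurable_sum _ fun i _ => hXmeas i
  · rw [hW'eq]
    exact Finset.measurable_sum _ fun k _ =>
      (Finset.measurable_sum _ fun i _ => hXmeas i).indicator (hsets k)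
  · rw [hGeq]
    exact Finset.measurable_sum _ fun k _ =>
      (((hXmeas k).const_smul ((n : ℝ))).neg).indicator (hsets k)
  · exact memLp_finset_sum _ fun i _ => hX2 i
  · rw [hW'eq]
    exact memLp_finset_sum _ fun k _ =>
      (memLp_finset_sum _ fun i _ => hX2 i).indicator (hsets k)
  · rw [hGeq]
    exact memLp_finset_sum _ fun k _ =>
      (((hX2 k).const_smul ((n : ℝ))).neg).indicator (hsets k)
  intro F hF hint1 hint2 hint3
  have hmapIXs : μ.map (fun ω => (I ω, Xs ω)) = (μ.map I).prod (μ.map Xs) :=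
    (indepFun_iff_map_prod_eq_prod_map_map hI.aemeasurable hXs.aemeasurable).1 hIindep
  have hpos : ∀ k : ι, μ.map I {k} ≠ 0 := by
    intro k
    rw [hIunif k, hcard]
    simp [ENNReal.div_eq_zero_iff, hn.ne']
  have htoReal : ∀ k : ι, (μ.map I {k}).toReal = 1 / (n : ℝ) := by
    intro k
    rw [hIunif k, hcard]
    simp [ENNReal.toReal_div]
  set H1 : ι × (ι → Fin d → ℝ) → ℝ :=
    fun p => ∑ j, (-((n : ℝ) • p.2 p.1)) j * F (∑ i ∈ (A p.1)ᶜ, p.2 i) j with hH1def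
  set H2 : ι × (ι → Fin d → ℝ) → ℝ :=
    fun p => ∑ j, (-((n : ℝ) • p.2 p.1)) j * F (∑ i, p.2 i) j with hH2def
  have hcoord : ∀ (k : ι) (j : Fin d), Measurable fun x : ι → Fin d → ℝ => x k j :=
    fun k j => (measurable_pi_apply j).comp (measurable_pi_apply k)
  have hH1m : Measurable H1 := by
    have h : Measurable fun q : (ι → Fin d → ℝ) × ι => H1 (q.2, q.1) := by
      refine measurable_from_prod_countable_left fun k => ?_
      show Measurable fun x : ι → Fin d → ℝ => H1 (k, x)
      simp only [hH1def]
      refine Finset.measurable_sum _ fun j _ => Measurable.mul ?_ ?_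
      · exact ((hcoord k j).const_mul ((n : ℝ))).neg
      · exact (measurable_pi_apply j).comp
          (hF.comp (Finset.measurable_sum _ fun i _ => measurable_pi_apply i))
    exact h.comp measurable_swap
  have hH2m : Measurable H2 := by
    have h : Measurable fun q : (ι → Fin d → ℝ) × ι => H2 (q.2, q.1) := by
      refine measurable_from_prod_countable_left fun k => ?_
      show Measurable fun x : ι → Fin d → ℝ => H2 (k, x)
      simp only [hH2def]
      refine Finset.measurable_sum _ fun j _ => Measurable.mul ?_ ?_
      · exact ((hcoord k j).const_mul ((n : ℝ))).neg
      · exact (measurable_pi_apply j).comp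
          (hF.comp (Finset.measurable_sum _ fun i _ => measurable_pi_apply i))
    exact h.comp measurable_swap
  have hint1b : Integrable (fun ω => H1 (I ω, Xs ω)) μ := by
    refine hint1.congr (Filter.Eventually.of_forall fun ω => ?_)
    simp only [hH1def, hXsdef]
  have hint2b : Integrable (fun ω => H2 (I ω, Xs ω)) μ := by
    refine hint2.congr (Filter.Eventually.of_forall fun ω => ?_)
    simp only [hH2def, hXsdef]
  obtain ⟨hint1k, heq1⟩ := helper_decomp μ I Xs hI hXs hmapIXs hpos H1 hH1m hint1b
  obtain ⟨hint2k, heq2⟩ := helper_decomp μ I Xs hI hXs hmapIXs hpos H2 hH2m hint2b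
  -- each term of the first integral vanishes
  have hzero : ∀ k : ι, ∫ ω, H1 (k, Xs ω) ∂μ = 0 := by
    intro k
    have key := zero_term μ (fun ω => -((n : ℝ) • X k ω))
      (fun ω => fun j' : {j' // j' ∉ A k} => X (j' : ι) ω)
      (((hXmeas k).const_smul ((n : ℝ))).neg)
      (measurable_pi_lambda _ fun j' => hXmeas j')
      ((((hX2 k).integrable one_le_two).smul ((n : ℝ))).neg)
      (fun j => by
        have h0 : (fun ω => (-((n : ℝ) • X k ω)) j) = fun ω => -((n : ℝ) * X k ω j) := rfl
        rw [h0, integral_neg, integral_const_mul, hXmean k j, mul_zero, neg_zero])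
      ((hlocal k).comp ((measurable_id.const_smul ((n : ℝ))).neg) measurable_id)
      (fun b => F (∑ j' : {j' // j' ∉ A k}, b j'))
      (hF.comp (Finset.measurable_sum _ fun j' _ => measurable_pi_apply j'))
    rw [← key]
    refine integral_congr_ae (Filter.Eventually.of_forall fun ω => ?_)
    simp only [hH1def, hXsdef]
    refine Finset.sum_congr rfl fun j _ => ?_
    congr 2
    exact Finset.sum_subtype _ (fun x => Finset.mem_compl) _
  have hH2val : ∀ (k : ι) (ω : Ω), H2 (k, Xs ω)
      = -(n : ℝ) * ∑ j, X k ω j * F (∑ i, X i ω) j := by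
    intro k ω
    simp only [hH2def, hXsdef]
    rw [Finset.mul_sum]
    refine Finset.sum_congr rfl fun j _ => ?_
    show -((n : ℝ) * X k ω j) * F (∑ i, X i ω) j
      = -(n : ℝ) * (X k ω j * F (∑ i, X i ω) j)
    ring
  have hSkint : ∀ k : ι, Integrable (fun ω => ∑ j, X k ω j * F (∑ i, X i ω) j) μ := by
    intro k
    have h1 : Integrable (fun ω => -(n : ℝ) * ∑ j, X k ω j * F (∑ i, X i ω) j) μ :=
      (hint2k k).congr (Filter.Eventually.of_forall fun ω => hH2val k ω)
    have h2 := h1.const_mul (-(1 / (n : ℝ)))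
    refine h2.congr (Filter.Eventually.of_forall fun ω => ?_)
    show -(1 / (n : ℝ)) * (-(n : ℝ) * ∑ j, X k ω j * F (∑ i, X i ω) j)
      = ∑ j, X k ω j * F (∑ i, X i ω) j
    rw [← mul_assoc, neg_mul_neg, one_div, inv_mul_cancel₀ hnR, one_mul]
  have hints2 : ∀ k : ι, ∫ ω, H2 (k, Xs ω) ∂μ
      = -(n : ℝ) * ∫ ω, ∑ j, X k ω j * F (∑ i, X i ω) j ∂μ := by
    intro k
    rw [integral_congr_ae (Filter.Eventually.of_forall (hH2val k)), integral_const_mul]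
  have hfirst : ∫ ω, H1 (I ω, Xs ω) ∂μ = 0 := by
    rw [heq1]
    exact Finset.sum_eq_zero fun k _ => by rw [hzero k, mul_zero]
  have hsecond : ∫ ω, H2 (I ω, Xs ω) ∂μ
      = - ∫ ω, ∑ j, (∑ i, X i ω) j * F (∑ i, X i ω) j ∂μ := by
    rw [heq2]
    have hterm : ∀ k ∈ Finset.univ, (μ.map I {k}).toReal * ∫ ω, H2 (k, Xs ω) ∂μ
        = - ∫ ω, ∑ j, X k ω j * F (∑ i, X i ω) j ∂μ := by
      intro k _
      rw [htoReal k, hints2 k, ← mul_assoc, one_div, mul_neg, inv_mul_cancel₀ hnR,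
        neg_one_mul]
    rw [Finset.sum_congr rfl hterm, Finset.sum_neg_distrib,
      ← integral_finset_sum _ fun k _ => hSkint k]
    congr 1
    refine integral_congr_ae (Filter.Eventually.of_forall fun ω => ?_)
    show ∑ k : ι, ∑ j : Fin d, X k ω j * F (∑ i, X i ω) j
      = ∑ j : Fin d, (∑ i, X i ω) j * F (∑ i, X i ω) j
    rw [Finset.sum_comm]
    refine Finset.sum_congr rfl fun j _ => ?_
    rw [← Finset.sum_mul]
    congr 1
    exact (Finset.sum_apply j Finset.univ fun i => X i ω).symm
  have hfirstb : ∫ ω, ∑ i, (-((n : ℝ) • X (I ω) ω)) i * F (∑ i ∈ (A (I ω))ᶜ, X i ω) i ∂μ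
      = 0 := by
    rw [← hfirst]
  have hsecondb : ∫ ω, ∑ i, (-((n : ℝ) • X (I ω) ω)) i * F (∑ i, X i ω) i ∂μ
      = - ∫ ω, ∑ i, (∑ i', X i' ω) i * F (∑ i', X i' ω) i ∂μ := by
    rw [← hsecond]
  simp only []
  rw [hfirstb, hsecondb]
  ring

end
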